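/- Let Q be a finite loop. If P^ω = ⋃_{i≥1} P^i(Q) is a normal subloop of Q, then the quotient Q/P^ω is an abelian group, hence Q' ⊆ P^ω; consequently P^ω = Q' or P^ω = Q' ∪ aQ' with a² ∈ Q'. -/

import Mathlib

set_option linter.unusedSectionVars false

/-- A loop: a magma with two-sided identity in which all left and right
translations are bijections. -/
class Loop (Q : Type*) extends Mul Q, One Q where
  one_mul : ∀ a : Q, 1 * a = a
  mul_one : ∀ a : Q, a * 1 = a
  mulLeft_bijective : ∀ a : Q, Function.Bijective fun x : Q => a * x
  mulRight_bijective : ∀ a : Q, Function.Bijective fun x : Q => x * a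

/-- `IsProdOf s x` means `x` can be written as a product, under some ordering
and association, whose multiset of factors is exactly `s`. -/
inductive IsProdOf {Q : Type*} [Mul Q] : Multiset Q → Q → Prop
  | single (a : Q) : IsProdOf {a} a
  | mul {s t : Multiset Q} {a b : Q} :
      IsProdOf s a → IsProdOf t b → IsProdOf (s + t) (a * b)

/-- `fullProds Q k` is `P^k(Q)`: elements expressible as a product (in some
order and association) containing each element of `Q` exactly `k` times. -/
def fullProds (Q : Type*) [Mul Q] [Fintype Q] (k : ℕ) : Set Q :=
  {x | IsProdOf (k • (Finset.univ : Finset Q).val) x}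

/-- The smallest congruence on `Q` whose quotient is a group; its class of `1`
is the associator subloop `A(Q)`, and its classes are the cosets of `A(Q)`. -/
def assocRel {Q : Type*} [Mul Q] (x y : Q) : Prop :=
  ∀ r : Q → Q → Prop, Equivalence r →
    (∀ a b c d, r a b → r c d → r (a * c) (b * d)) →
    (∀ a b c, r ((a * b) * c) (a * (b * c))) →
    r x y

/-- The smallest congruence on `Q` whose quotient is an abelian group; its
class of `1` is the derived subloop `Q'`, and its classes are the cosets of `Q'`. -/
def commRel {Q : Type*} [Mul Q] (x y : Q) : Prop :=
  ∀ r : Q → Q → Prop, Equivalence r →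
    (∀ a b c d, r a b → r c d → r (a * c) (b * d)) →
    (∀ a b c, r ((a * b) * c) (a * (b * c))) →
    (∀ a b, r (a * b) (b * a)) →
    r x y

/-- `P^ω(Q) = ⋃_{i ≥ 1} P^i(Q)`. -/
def fullProdsOmega (Q : Type*) [Mul Q] [Fintype Q] : Set Q :=
  {x | ∃ k : ℕ, 1 ≤ k ∧ x ∈ fullProds Q k}

structure LoopCongruence (Q : Type*) [Mul Q] where
  r : Q → Q → Prop
  iseqv : Equivalence r
  mul_compat : ∀ a b c d, r a b → r c d → r (a * c) (b * d)

section Helpers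
variable {Q : Type*} [Loop Q]

/-- Right cancellation modulo a multiplicative congruence, via iterating the
right translation to its permutation order. -/
private lemma loop_cancel_right [Fintype Q] {r : Q → Q → Prop}
    (hE : Equivalence r)
    (hm : ∀ a b c d : Q, r a b → r c d → r (a * c) (b * d))
    {x y : Q} (w : Q) (h : r (x * w) (y * w)) : r x y := by
  classical
  let e : Equiv.Perm Q := Equiv.ofBijective _ (Loop.mulRight_bijective w)
  have he : ∀ z : Q, e z = z * w := fun z => rfl
  have key : ∀ j, r ((e ^ (j + 1)) x) ((e ^ (j + 1)) y) := by
    intro j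
    induction j with
    | zero => simpa [he] using h
    | succ j ih =>
        have h2 := hm _ _ w w ih (hE.refl w)
        have hx : (e ^ (j + 1 + 1)) x = (e ^ (j + 1)) x * w := by
          rw [pow_succ', Equiv.Perm.mul_apply, he]
        have hy : (e ^ (j + 1 + 1)) y = (e ^ (j + 1)) y * w := by
          rw [pow_succ', Equiv.Perm.mul_apply, he]
        rw [hx, hy]; exact h2
  have hn : 0 < orderOf e := orderOf_pos e
  obtain ⟨m, hm'⟩ : ∃ m, orderOf e = m + 1 := ⟨orderOf e - 1, by omega⟩
  have hk := key m
  rw [← hm', pow_orderOf_eq_one e] at hk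
  simpa using hk

private def pl (l : List Q) : Q := l.foldr (· * ·) 1

private lemma exists_isProdOf {s : Multiset Q} (hs : s ≠ 0) : ∃ x, IsProdOf s x := by
  induction s using Multiset.induction with
  | empty => exact absurd rfl hs
  | cons a t ih =>
      rcases eq_or_ne t 0 with rfl | ht
      · exact ⟨a, IsProdOf.single a⟩
      · obtain ⟨y, hy⟩ := ih ht
        refine ⟨a * y, ?_⟩
        rw [← Multiset.singleton_add]
        exact IsProdOf.mul (IsProdOf.single a) hy

private lemma P_nonempty [Fintype Q] {k : ℕ} (hk : 1 ≤ k) : (fullProds Q k).Nonempty := by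
  classical
  apply exists_isProdOf
  intro h
  have h1 := congrArg (Multiset.count 1) h
  rw [Multiset.count_nsmul] at h1
  simp [Multiset.count_univ] at h1
  omega

private lemma mem_P_add [Fintype Q] {j k : ℕ} {x y : Q}
    (hx : x ∈ fullProds Q j) (hy : y ∈ fullProds Q k) :
    x * y ∈ fullProds Q (j + k) := by
  show IsProdOf _ _
  rw [add_nsmul]
  exact IsProdOf.mul hx hy

private lemma exists_inv [Fintype Q] :
    ∃ inv : Q → Q, Function.Bijective inv ∧ ∀ x : Q, x * inv x = 1 := by
  classical
  choose inv hinv using fun x : Q => (Loop.mulLeft_bijective x).surjective 1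
  refine ⟨inv, ?_, hinv⟩
  rw [Finite.injective_iff_bijective.symm]
  intro x₁ x₂ h
  have h1 : x₁ * inv x₁ = 1 := hinv x₁
  have h2 : x₂ * inv x₁ = 1 := by rw [h]; exact hinv x₂
  exact (Loop.mulRight_bijective (inv x₁)).injective (h1.trans h2.symm)

variable {r : Q → Q → Prop}
  (hE : Equivalence r)
  (hm : ∀ a b c d : Q, r a b → r c d → r (a * c) (b * d))
  (ha : ∀ a b c : Q, r ((a * b) * c) (a * (b * c)))
  (hc : ∀ a b : Q, r (a * b) (b * a))

include hE hm ha hc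

private lemma perm_pl {l₁ l₂ : List Q} (h : l₁.Perm l₂) : r (pl l₁) (pl l₂) := by
  induction h with
  | nil => exact hE.refl _
  | cons x _ ih => exact hm _ _ _ _ (hE.refl x) ih
  | swap x y l =>
      show r (y * (x * pl l)) (x * (y * pl l))
      exact hE.trans (hE.symm (ha y x (pl l)))
        (hE.trans (hm _ _ _ _ (hc y x) (hE.refl (pl l))) (ha x y (pl l)))
  | trans _ _ ih₁ ih₂ => exact hE.trans ih₁ ih₂

private lemma pl_append (l₁ l₂ : List Q) : r (pl (l₁ ++ l₂)) (pl l₁ * pl l₂) := by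
  induction l₁ with
  | nil =>
      show r (pl l₂) (1 * pl l₂)
      rw [Loop.one_mul]; exact hE.refl _
  | cons a l ih =>
      show r (a * pl (l ++ l₂)) ((a * pl l) * pl l₂)
      exact hE.trans (hm _ _ _ _ (hE.refl a) ih) (hE.symm (ha _ _ _))

private lemma isProdOf_rel_pl {s : Multiset Q} {x : Q} (h : IsProdOf s x) :
    ∀ l : List Q, (l : Multiset Q) = s → r x (pl l) := by
  induction h with
  | single a =>
      intro l hl
      have hperm : ([a] : List Q).Perm l := by
        rw [← Multiset.coe_eq_coe]
        simpa using hl.symm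
      have h1 : r (pl [a]) (pl l) := perm_pl hE hm ha hc hperm
      have h2 : pl [a] = a := Loop.mul_one a
      rwa [h2] at h1
  | mul hs ht ihs iht =>
      rename_i s t a b
      intro l hl
      have h1 : r a (pl s.toList) := ihs _ s.coe_toList
      have h2 : r b (pl t.toList) := iht _ t.coe_toList
      have hperm : l.Perm (s.toList ++ t.toList) := by
        rw [← Multiset.coe_eq_coe]
        rw [hl]; rw [← Multiset.coe_add]; simp
      refine hE.trans (hm _ _ _ _ h1 h2) (hE.trans (hE.symm (pl_append hE hm ha hc _ _)) ?_)
      exact hE.symm (perm_pl hE hm ha hc hperm)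

private lemma isProdOf_rel {s : Multiset Q} {x y : Q}
    (h1 : IsProdOf s x) (h2 : IsProdOf s y) : r x y :=
  hE.trans (isProdOf_rel_pl hE hm ha hc h1 _ s.coe_toList)
    (hE.symm (isProdOf_rel_pl hE hm ha hc h2 _ s.coe_toList))

private lemma rel_one_of_mem_P2 [Fintype Q] {z : Q} (hz : z ∈ fullProds Q 2) : r z 1 := by
  classical
  obtain ⟨inv, hbij, hinv⟩ := exists_inv (Q := Q)
  set l : List Q := (Finset.univ : Finset Q).val.toList with hldef
  set L : List Q := l.flatMap (fun x => [x, inv x]) with hLdef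
  have hfold : ∀ l' : List Q, r (pl (l'.flatMap (fun x => [x, inv x]))) 1 := by
    intro l'
    induction l' with
    | nil => exact hE.refl 1
    | cons a l' ih =>
        show r (a * (inv a * pl (l'.flatMap _))) 1
        refine hE.trans (hE.symm (ha a (inv a) _)) ?_
        rw [hinv a, Loop.one_mul]
        exact ih
  have hbindcoe : ∀ l' : List Q,
      ((l'.flatMap (fun x => [x, inv x]) : List Q) : Multiset Q)
        = (l' : Multiset Q) + ((l'.map inv : List Q) : Multiset Q) := by
    intro l'
    induction l' with
    | nil => rfl
    | cons a l' ih =>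
        show ((a :: inv a :: l'.flatMap (fun x => [x, inv x]) : List Q) : Multiset Q) = _
        simp only [← Multiset.cons_coe, List.map_cons, ih, Multiset.cons_add, Multiset.add_cons]
        rw [Multiset.cons_swap]
  have hmapuniv : Multiset.map inv (Finset.univ : Finset Q).val = (Finset.univ : Finset Q).val := by
    let e : Q ≃ Q := Equiv.ofBijective inv hbij
    have h1 : Finset.map e.toEmbedding Finset.univ = Finset.univ := Finset.map_univ_equiv e
    have h2 := congrArg Finset.val h1
    rw [Finset.map_val] at h2
    exact h2
  have hLcoe : (L : Multiset Q) = 2 • (Finset.univ : Finset Q).val := by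
    rw [hLdef, hbindcoe, two_nsmul]
    congr 1
    · rw [hldef, Multiset.coe_toList]
    · rw [← Multiset.map_coe, hldef, Multiset.coe_toList, hmapuniv]
  exact hE.trans (isProdOf_rel_pl hE hm ha hc hz L hLcoe) (hfold l)

end Helpers

/-- If `P^ω` is a normal subloop (i.e. the class of `1` of some congruence `c`),
then the quotient `Q/P^ω` is an abelian group (associativity and commutativity
hold modulo `c`), hence `Q' ⊆ P^ω`; consequently `P^ω = Q'` or
`P^ω = Q' ∪ aQ'` with `a² ∈ Q'`. -/
theorem fullProdsOmega_normal_consequences (Q : Type*) [Loop Q] [Fintype Q]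
    (c : LoopCongruence Q) (hN : {x : Q | c.r x 1} = fullProdsOmega Q) :
    (∀ a b d : Q, c.r ((a * b) * d) (a * (b * d))) ∧
    (∀ a b : Q, c.r (a * b) (b * a)) ∧
    ({x : Q | commRel x 1} ⊆ fullProdsOmega Q) ∧
    (fullProdsOmega Q = {x : Q | commRel x 1} ∨
      ∃ a : Q, commRel (a * a) 1 ∧
        fullProdsOmega Q = {x : Q | commRel x 1} ∪ {x : Q | commRel x a}) := by
  classical
  set v : Multiset Q := (Finset.univ : Finset Q).val with hv
  have hmemN : ∀ x : Q, x ∈ fullProdsOmega Q → c.r x 1 := by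
    intro x hx
    have : x ∈ {y : Q | c.r y 1} := by rw [hN]; exact hx
    exact this
  have hNmem : ∀ x : Q, c.r x 1 → x ∈ fullProdsOmega Q := by
    intro x hx
    rw [← hN]; exact hx
  -- a small-multiset splitting device
  have hsplit3 : ∀ (m : Multiset Q) (k : ℕ), 1 ≤ k → Multiset.card m ≤ k →
      m + (k • v - m) = k • v := by
    intro m k hk hcard
    apply add_tsub_cancel_of_le
    rw [Multiset.le_iff_count]
    intro z
    have h1 : Multiset.count z m ≤ Multiset.card m := Multiset.count_le_card z m
    have h2 : Multiset.count z (k • v) = k := by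
      rw [Multiset.count_nsmul, hv, Multiset.count_univ, mul_one]
    omega
  -- generic congruence-class comparison of two products with the same small multiset
  have hgen : ∀ (m : Multiset Q) (k : ℕ), 1 ≤ k → Multiset.card m = k →
      ∀ x y : Q, IsProdOf m x → IsProdOf m y → c.r x y := by
    intro m k hk hcard x y hx hy
    rcases eq_or_ne (k • v - m) 0 with hT | hT
    · -- the products are full products themselves
      have hm' : m = k • v := by
        have := hsplit3 m k hk (le_of_eq hcard)
        rw [hT, add_zero] at this
        exact this
      have hx' : x ∈ fullProdsOmega Q :=
        ⟨k, hk, by show IsProdOf (k • v) x; rw [← hm']; exact hx⟩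
      have hy' : y ∈ fullProdsOmega Q :=
        ⟨k, hk, by show IsProdOf (k • v) y; rw [← hm']; exact hy⟩
      exact c.iseqv.trans (hmemN x hx') (c.iseqv.symm (hmemN y hy'))
    · obtain ⟨w, hw⟩ := exists_isProdOf hT
      have hx2 : x * w ∈ fullProdsOmega Q := by
        refine ⟨k, hk, ?_⟩
        show IsProdOf (k • v) (x * w)
        rw [← hsplit3 m k hk (le_of_eq hcard)]
        exact IsProdOf.mul hx hw
      have hy2 : y * w ∈ fullProdsOmega Q := by
        refine ⟨k, hk, ?_⟩
        show IsProdOf (k • v) (y * w)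
        rw [← hsplit3 m k hk (le_of_eq hcard)]
        exact IsProdOf.mul hy hw
      have := c.iseqv.trans (hmemN _ hx2) (c.iseqv.symm (hmemN _ hy2))
      exact loop_cancel_right c.iseqv c.mul_compat w this
  have hassoc : ∀ a b d : Q, c.r ((a * b) * d) (a * (b * d)) := by
    intro a b d
    have e1 : ({a} + {b} + {d} : Multiset Q) = {a, b, d} := by
      simp only [Multiset.singleton_add]
      rfl
    have e2 : ({a} + ({b} + {d}) : Multiset Q) = {a, b, d} := by
      simp only [Multiset.singleton_add]
      rfl
    have p1 : IsProdOf ({a, b, d} : Multiset Q) ((a * b) * d) := by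
      rw [← e1]
      exact IsProdOf.mul (IsProdOf.mul (IsProdOf.single a) (IsProdOf.single b))
        (IsProdOf.single d)
    have p2 : IsProdOf ({a, b, d} : Multiset Q) (a * (b * d)) := by
      rw [← e2]
      exact IsProdOf.mul (IsProdOf.single a)
        (IsProdOf.mul (IsProdOf.single b) (IsProdOf.single d))
    exact hgen {a, b, d} 3 (by norm_num) (by simp) _ _ p1 p2
  have hcomm : ∀ a b : Q, c.r (a * b) (b * a) := by
    intro a b
    have e1 : ({a} + {b} : Multiset Q) = {a, b} := by
      simp only [Multiset.singleton_add]
      rfl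
    have e2 : ({b} + {a} : Multiset Q) = {a, b} := by
      simp only [Multiset.singleton_add]
      show (b ::ₘ a ::ₘ 0 : Multiset Q) = _
      rw [Multiset.cons_swap]
      rfl
    have p1 : IsProdOf ({a, b} : Multiset Q) (a * b) := by
      rw [← e1]; exact IsProdOf.mul (IsProdOf.single a) (IsProdOf.single b)
    have p2 : IsProdOf ({a, b} : Multiset Q) (b * a) := by
      rw [← e2]; exact IsProdOf.mul (IsProdOf.single b) (IsProdOf.single a)
    exact hgen {a, b} 2 (by norm_num) (by simp) _ _ p1 p2
  -- commRel facts
  have hEq : Equivalence (commRel (Q := Q)) := by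
    constructor
    · intro x r hr hm ha hc; exact hr.refl x
    · intro x y h r hr hm ha hc; exact hr.symm (h r hr hm ha hc)
    · intro x y z h1 h2 r hr hm ha hc
      exact hr.trans (h1 r hr hm ha hc) (h2 r hr hm ha hc)
  have hMul : ∀ a b x y : Q, commRel a b → commRel x y → commRel (a * x) (b * y) := by
    intro a b x y h1 h2 r hr hm ha hc
    exact hm _ _ _ _ (h1 r hr hm ha hc) (h2 r hr hm ha hc)
  have hA : ∀ a b x : Q, commRel ((a * b) * x) (a * (b * x)) :=
    fun a b x r hr hm ha hc => ha a b x
  have hC : ∀ a b : Q, commRel (a * b) (b * a) :=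
    fun a b r hr hm ha hc => hc a b
  have hle : ∀ x y : Q, commRel x y → c.r x y :=
    fun x y h => h c.r c.iseqv c.mul_compat hassoc hcomm
  have hsub : {x : Q | commRel x 1} ⊆ fullProdsOmega Q := by
    intro x hx
    exact hNmem x (hle x 1 hx)
  -- the element u and the parity analysis
  obtain ⟨u, hu⟩ := P_nonempty (Q := Q) (k := 1) le_rfl
  have hsame : ∀ (k : ℕ) (x y : Q), x ∈ fullProds Q k → y ∈ fullProds Q k → commRel x y :=
    fun k x y hx hy => isProdOf_rel hEq hMul hA hC hx hy
  have hP2 : ∀ z : Q, z ∈ fullProds Q 2 → commRel z 1 :=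
    fun z hz => rel_one_of_mem_P2 hEq hMul hA hC hz
  have hstep : ∀ (k : ℕ) (z y : Q), z ∈ fullProds Q (k + 2) → y ∈ fullProds Q k →
      commRel z y := by
    intro k z y hz hy
    obtain ⟨w2, hw2⟩ := P_nonempty (Q := Q) (k := 2) (by norm_num)
    have h1 : y * w2 ∈ fullProds Q (k + 2) := mem_P_add hy hw2
    have h2 : commRel z (y * w2) := hsame _ _ _ hz h1
    have h3 : commRel (y * w2) (y * 1) := hMul _ _ _ _ (hEq.refl y) (hP2 _ hw2)
    rw [Loop.mul_one] at h3
    exact hEq.trans h2 h3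
  have parity : ∀ m : ℕ,
      (∀ z : Q, z ∈ fullProds Q (2 * m + 1) → commRel z u) ∧
      (∀ z : Q, z ∈ fullProds Q (2 * m + 2) → commRel z 1) := by
    intro m
    induction m with
    | zero =>
        refine ⟨fun z hz => hsame 1 z u hz hu, fun z hz => hP2 z hz⟩
    | succ m ih =>
        constructor
        · intro z hz
          obtain ⟨y, hy⟩ := P_nonempty (Q := Q) (k := 2 * m + 1) (by omega)
          have he : 2 * (m + 1) + 1 = (2 * m + 1) + 2 := by ring
          rw [he] at hz
          exact hEq.trans (hstep _ _ _ hz hy) (ih.1 y hy)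
        · intro z hz
          obtain ⟨y, hy⟩ := P_nonempty (Q := Q) (k := 2 * m + 2) (by omega)
          have he : 2 * (m + 1) + 2 = (2 * m + 2) + 2 := by ring
          rw [he] at hz
          exact hEq.trans (hstep _ _ _ hz hy) (ih.2 y hy)
  refine ⟨hassoc, hcomm, hsub, Or.inr ⟨u, ?_, ?_⟩⟩
  · have huu : u * u ∈ fullProds Q 2 := by
      have := mem_P_add hu hu
      norm_num at this
      exact this
    exact hP2 _ huu
  · ext z
    simp only [Set.mem_union, Set.mem_setOf_eq]
    constructor
    · rintro ⟨k, hk1, hk⟩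
      rcases Nat.even_or_odd k with ⟨m, hmk⟩ | ⟨m, hmk⟩
      · -- k even, k ≥ 1 so k = 2*(m-1)+2
        obtain ⟨m', hm'⟩ : ∃ m', k = 2 * m' + 2 := ⟨m - 1, by omega⟩
        rw [hm'] at hk
        exact Or.inl ((parity m').2 z hk)
      · rw [hmk] at hk
        exact Or.inr ((parity m).1 z hk)
    · rintro (h | h)
      · exact hNmem z (hle _ _ h)
      · have hu1 : c.r u 1 := hmemN u ⟨1, le_rfl, hu⟩
        exact hNmem z (c.iseqv.trans (hle _ _ h) hu1)
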